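/- Let H₁ < H₂ and Q ∈ ℝ. Suppose ψ : ℝ × [H₁,H₂] → ℝ is continuous, twice continuously differentiable and harmonic (ψ_xx + ψ_yy = 0) in the open strip ℝ × (H₁,H₂), satisfies ψ(x,H₁) = 0 and ψ(x,H₂) = Q for all x ∈ ℝ, and 0 ≤ ψ ≤ Q on the strip. Then ψ(x,y) = Q·(y−H₁)/(H₂−H₁) for all (x,y) ∈ ℝ × [H₁,H₂]. -/

import Mathlib

open Set Filter

/-- The partial derivative of `f : ℝ × ℝ → ℝ` in the `x`-direction. -/
noncomputable def pdx (f : ℝ × ℝ → ℝ) (p : ℝ × ℝ) : ℝ := fderiv ℝ f p (1, 0)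

/-- The partial derivative of `f : ℝ × ℝ → ℝ` in the `y`-direction. -/
noncomputable def pdy (f : ℝ × ℝ → ℝ) (p : ℝ × ℝ) : ℝ := fderiv ℝ f p (0, 1)

/-- The Laplacian `f_xx + f_yy` of `f : ℝ × ℝ → ℝ`. -/
noncomputable def lap (f : ℝ × ℝ → ℝ) (p : ℝ × ℝ) : ℝ :=
  fderiv ℝ (fun q => pdx f q) p (1, 0) + fderiv ℝ (fun q => pdy f q) p (0, 1)

section sep
variable {g h g₁ h₁ g₂ h₂ : ℝ → ℝ}

lemma hasFDerivAt_sep (hg : ∀ t, HasDerivAt g (g₁ t) t) (hh : ∀ t, HasDerivAt h (h₁ t) t)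
    (q : ℝ × ℝ) :
    HasFDerivAt (fun p : ℝ × ℝ => g p.1 * h p.2)
      ((fun p : ℝ × ℝ => g p.1) q • (h₁ q.2 • ContinuousLinearMap.snd ℝ ℝ ℝ) +
        (fun p : ℝ × ℝ => h p.2) q • (g₁ q.1 • ContinuousLinearMap.fst ℝ ℝ ℝ)) q := by
  have h1 : HasFDerivAt (fun p : ℝ × ℝ => g p.1) (g₁ q.1 • ContinuousLinearMap.fst ℝ ℝ ℝ) q :=
    (hg q.1).comp_hasFDerivAt q (hasFDerivAt_fst)
  have h2 : HasFDerivAt (fun p : ℝ × ℝ => h p.2) (h₁ q.2 • ContinuousLinearMap.snd ℝ ℝ ℝ) q :=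
    (hh q.2).comp_hasFDerivAt q (hasFDerivAt_snd)
  exact h1.mul h2

lemma pdx_sep (hg : ∀ t, HasDerivAt g (g₁ t) t) (hh : ∀ t, HasDerivAt h (h₁ t) t)
    (q : ℝ × ℝ) : pdx (fun p : ℝ × ℝ => g p.1 * h p.2) q = g₁ q.1 * h q.2 := by
  rw [pdx, (hasFDerivAt_sep hg hh q).fderiv]
  simp
  ring

lemma pdy_sep (hg : ∀ t, HasDerivAt g (g₁ t) t) (hh : ∀ t, HasDerivAt h (h₁ t) t)
    (q : ℝ × ℝ) : pdy (fun p : ℝ × ℝ => g p.1 * h p.2) q = g q.1 * h₁ q.2 := by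
  rw [pdy, (hasFDerivAt_sep hg hh q).fderiv]
  simp

lemma lap_sep (hg : ∀ t, HasDerivAt g (g₁ t) t) (hh : ∀ t, HasDerivAt h (h₁ t) t)
    (hg₁ : ∀ t, HasDerivAt g₁ (g₂ t) t) (hh₁ : ∀ t, HasDerivAt h₁ (h₂ t) t)
    (p : ℝ × ℝ) :
    lap (fun p : ℝ × ℝ => g p.1 * h p.2) p = g₂ p.1 * h p.2 + g p.1 * h₂ p.2 := by
  have e1 : (fun q => pdx (fun p : ℝ × ℝ => g p.1 * h p.2) q)
      = fun q : ℝ × ℝ => g₁ q.1 * h q.2 := funext (pdx_sep hg hh)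
  have e2 : (fun q => pdy (fun p : ℝ × ℝ => g p.1 * h p.2) q)
      = fun q : ℝ × ℝ => g q.1 * h₁ q.2 := funext (pdy_sep hg hh)
  rw [lap, e1, e2]
  have t1 := pdx_sep hg₁ hh p
  have t2 := pdy_sep hg hh₁ p
  rw [pdx] at t1; rw [pdy] at t2
  rw [t1, t2]

lemma contDiff_sep (hg : ContDiff ℝ 2 g) (hh : ContDiff ℝ 2 h) :
    ContDiff ℝ 2 (fun p : ℝ × ℝ => g p.1 * h p.2) :=
  (hg.comp contDiff_fst).mul (hh.comp contDiff_snd)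
end sep
lemma pdx_diffAt {f : ℝ × ℝ → ℝ} {U : Set (ℝ × ℝ)} {p : ℝ × ℝ} (hU : IsOpen U) (hp : p ∈ U)
    (hf : ContDiffOn ℝ 2 f U) :
    DifferentiableAt ℝ (fun q => pdx f q) p ∧ DifferentiableAt ℝ (fun q => pdy f q) p := by
  have h1 : ContDiffOn ℝ 1 (fun q => fderiv ℝ f q) U :=
    hf.fderiv_of_isOpen hU (by norm_num)
  constructor
  · exact (((h1.clm_apply contDiffOn_const).differentiableOn
      (by norm_num)).differentiableAt (hU.mem_nhds hp))
  · exact (((h1.clm_apply contDiffOn_const).differentiableOn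
      (by norm_num)).differentiableAt (hU.mem_nhds hp))

lemma lap_comb {f g : ℝ × ℝ → ℝ} {U : Set (ℝ × ℝ)} {p : ℝ × ℝ} (c : ℝ)
    (hU : IsOpen U) (hp : p ∈ U)
    (hf : ContDiffOn ℝ 2 f U) (hg : ContDiffOn ℝ 2 g U) :
    lap (fun q => c * f q + g q) p = c * lap f p + lap g p := by
  have hfd : ∀ q ∈ U, DifferentiableAt ℝ f q := fun q hq =>
    (hf.differentiableOn (by norm_num)).differentiableAt (hU.mem_nhds hq)
  have hgd : ∀ q ∈ U, DifferentiableAt ℝ g q := fun q hq =>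
    (hg.differentiableOn (by norm_num)).differentiableAt (hU.mem_nhds hq)
  have hx : (fun q => pdx (fun q => c * f q + g q) q)
      =ᶠ[nhds p] (fun q => c * pdx f q + pdx g q) := by
    filter_upwards [hU.mem_nhds hp] with q hq
    simp only [pdx]
    rw [fderiv_fun_add ((hfd q hq).const_mul c) (hgd q hq), fderiv_const_mul (hfd q hq)]
    simp
  have hy : (fun q => pdy (fun q => c * f q + g q) q)
      =ᶠ[nhds p] (fun q => c * pdy f q + pdy g q) := by
    filter_upwards [hU.mem_nhds hp] with q hq
    simp only [pdy]
    rw [fderiv_fun_add ((hfd q hq).const_mul c) (hgd q hq), fderiv_const_mul (hfd q hq)]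
    simp
  have hfx := (pdx_diffAt hU hp hf).1
  have hfy := (pdx_diffAt hU hp hf).2
  have hgx := (pdx_diffAt hU hp hg).1
  have hgy := (pdx_diffAt hU hp hg).2
  rw [lap, lap, lap, hx.fderiv_eq, hy.fderiv_eq,
    fderiv_fun_add (hfx.const_mul c) hgx, fderiv_fun_add (hfy.const_mul c) hgy,
    fderiv_const_mul hfx, fderiv_const_mul hfy]
  simp
  ring

lemma second_nonpos_of_localMax {g g' : ℝ → ℝ} {a c : ℝ}
    (hg : ∀ᶠ t in nhds a, HasDerivAt g (g' t) t)
    (hg' : HasDerivAt g' c a) (hmax : IsLocalMax g a) : c ≤ 0 := by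
  by_contra hc
  push_neg at hc
  have hga : g' a = 0 := hmax.hasDerivAt_eq_zero hg.self_of_nhds
  have hslope : Tendsto (slope g' a) (nhdsWithin a {a}ᶜ) (nhds c) :=
    hasDerivAt_iff_tendsto_slope.mp hg'
  have hpos : ∀ᶠ t in nhdsWithin a (Ioi a), 0 < g' t := by
    have h1 : ∀ᶠ t in nhdsWithin a (Ioi a), 0 < slope g' a t :=
      (hslope.mono_left (nhdsWithin_mono a fun t ht => ne_of_gt ht)).eventually
        (eventually_gt_nhds hc)
    have h2 : ∀ᶠ t in nhdsWithin a (Ioi a), a < t := eventually_mem_nhdsWithin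
    filter_upwards [h1, h2] with t h1 h2
    rw [slope_def_field, hga, sub_zero] at h1
    have := mul_pos h1 (sub_pos.mpr h2)
    rwa [div_mul_cancel₀ _ (ne_of_gt (sub_pos.mpr h2))] at this
  -- get a point b > a with derivative data and local max data on (a, b]
  have hmem : {t | (HasDerivAt g (g' t) t ∧ g t ≤ g a) ∧ 0 < g' t} ∈ nhdsWithin a (Ioi a) := by
    apply Filter.inter_mem _ hpos
    exact nhdsWithin_le_nhds (hg.and hmax)
  rcases mem_nhdsGT_iff_exists_Ioc_subset.mp hmem with ⟨b, hab, hsub⟩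
  have hab' : a < b := hab
  -- g is strictly monotone on [a, b]
  have hcont : ContinuousOn g (Icc a b) := by
    intro t ht
    rcases eq_or_lt_of_le ht.1 with rfl | h
    · exact hg.self_of_nhds.continuousAt.continuousWithinAt
    · exact ((hsub ⟨h, ht.2⟩).1.1.continuousAt).continuousWithinAt
  have hmono : StrictMonoOn g (Icc a b) := by
    apply strictMonoOn_of_deriv_pos (convex_Icc a b) hcont
    intro t ht
    rw [interior_Icc] at ht
    have h := hsub ⟨ht.1, ht.2.le⟩
    rw [h.1.1.deriv]
    exact h.2
  have : g a < g b := hmono (left_mem_Icc.mpr hab'.le) (right_mem_Icc.mpr hab'.le) hab'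
  have : g b ≤ g a := (hsub ⟨hab', le_refl b⟩).1.2
  linarith

lemma no_interior_max {f : ℝ × ℝ → ℝ} {U : Set (ℝ × ℝ)} {p : ℝ × ℝ}
    (hU : IsOpen U) (hp : p ∈ U) (hf : ContDiffOn ℝ 2 f U)
    (hpos : 0 < lap f p) (hmax : IsLocalMax f p) : False := by
  have hfd : ∀ q ∈ U, DifferentiableAt ℝ f q := fun q hq =>
    (hf.differentiableOn (by norm_num)).differentiableAt (hU.mem_nhds hq)
  -- x direction
  have clx : Continuous fun t : ℝ => ((t, p.2) : ℝ × ℝ) := continuous_id.prodMk continuous_const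
  have tlx : Tendsto (fun t : ℝ => ((t, p.2) : ℝ × ℝ)) (nhds p.1) (nhds p) := clx.continuousAt
  have hUx : ∀ᶠ t in nhds p.1, ((t, p.2) : ℝ × ℝ) ∈ U := tlx (hU.mem_nhds hp)
  have hgx : ∀ᶠ t in nhds p.1, HasDerivAt (fun t => f (t, p.2)) (pdx f (t, p.2)) t := by
    filter_upwards [hUx] with t ht
    exact ((hfd _ ht).hasFDerivAt).comp_hasDerivAt t
      ((hasDerivAt_id t).prodMk (hasDerivAt_const t p.2))
  have hg'x : HasDerivAt (fun t => pdx f (t, p.2)) (fderiv ℝ (fun q => pdx f q) p (1, 0)) p.1 :=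
    by
      have h : HasFDerivAt (fun q => pdx f q) (fderiv ℝ (fun q => pdx f q) p) (p.1, p.2) :=
        (pdx_diffAt hU hp hf).1.hasFDerivAt
      exact h.comp_hasDerivAt p.1
        ((hasDerivAt_id p.1).prodMk (hasDerivAt_const p.1 p.2))
  have hmx : IsLocalMax (fun t => f (t, p.2)) p.1 := tlx.eventually hmax
  have hA : fderiv ℝ (fun q => pdx f q) p (1, 0) ≤ 0 :=
    second_nonpos_of_localMax hgx hg'x hmx
  -- y direction
  have cly : Continuous fun t : ℝ => ((p.1, t) : ℝ × ℝ) := continuous_const.prodMk continuous_id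
  have tly : Tendsto (fun t : ℝ => ((p.1, t) : ℝ × ℝ)) (nhds p.2) (nhds p) := cly.continuousAt
  have hUy : ∀ᶠ t in nhds p.2, ((p.1, t) : ℝ × ℝ) ∈ U := tly (hU.mem_nhds hp)
  have hgy : ∀ᶠ t in nhds p.2, HasDerivAt (fun t => f (p.1, t)) (pdy f (p.1, t)) t := by
    filter_upwards [hUy] with t ht
    exact ((hfd _ ht).hasFDerivAt).comp_hasDerivAt t
      ((hasDerivAt_const t p.1).prodMk (hasDerivAt_id t))
  have hg'y : HasDerivAt (fun t => pdy f (p.1, t)) (fderiv ℝ (fun q => pdy f q) p (0, 1)) p.2 :=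
    by
      have h : HasFDerivAt (fun q => pdy f q) (fderiv ℝ (fun q => pdy f q) p) (p.1, p.2) :=
        (pdx_diffAt hU hp hf).2.hasFDerivAt
      exact h.comp_hasDerivAt p.2
        ((hasDerivAt_const p.2 p.1).prodMk (hasDerivAt_id p.2))
  have hmy : IsLocalMax (fun t => f (p.1, t)) p.2 := tly.eventually hmax
  have hB : fderiv ℝ (fun q => pdy f q) p (0, 1) ≤ 0 :=
    second_nonpos_of_localMax hgy hg'y hmy
  rw [lap] at hpos
  linarith
lemma rect_max {f : ℝ × ℝ → ℝ} {U : Set (ℝ × ℝ)} {a b c d M : ℝ}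
    (hab : a ≤ b) (hcd : c ≤ d) (hU : IsOpen U)
    (hsub : Ioo a b ×ˢ Ioo c d ⊆ U) (hf : ContDiffOn ℝ 2 f U)
    (hcont : ContinuousOn f (Icc a b ×ˢ Icc c d))
    (hlap : ∀ p ∈ Ioo a b ×ˢ Ioo c d, lap f p = 0)
    (hM : ∀ p ∈ Icc a b ×ˢ Icc c d, p ∉ Ioo a b ×ˢ Ioo c d → f p ≤ M) :
    ∀ p ∈ Icc a b ×ˢ Icc c d, f p ≤ M := by
  intro p hp
  set C : ℝ := max (a ^ 2) (b ^ 2) with hC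
  have hC0 : 0 ≤ C := le_trans (sq_nonneg a) (le_max_left _ _)
  have key : ∀ δ : ℝ, 0 < δ → f p ≤ M + δ * C := by
    intro δ hδ
    -- the perturbed function
    set F : ℝ × ℝ → ℝ := fun q => 1 * f q + (fun t : ℝ => δ * t ^ 2) q.1 * (fun _ : ℝ => (1 : ℝ)) q.2 with hF
    have hsq : ∀ t : ℝ, HasDerivAt (fun t : ℝ => δ * t ^ 2) (δ * (2 * t)) t := by
      intro t
      simpa using ((hasDerivAt_pow 2 t).const_mul δ)
    have hsq' : ∀ t : ℝ, HasDerivAt (fun t : ℝ => δ * (2 * t)) (δ * 2) t := by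
      intro t
      simpa using (((hasDerivAt_id t).const_mul 2).const_mul δ)
    have hone : ∀ t : ℝ, HasDerivAt (fun _ : ℝ => (1 : ℝ)) 0 t := fun t => hasDerivAt_const t 1
    have hzero : ∀ t : ℝ, HasDerivAt (fun _ : ℝ => (0 : ℝ)) 0 t := fun t => hasDerivAt_const t 0
    have hgC2 : ContDiff ℝ 2 (fun q : ℝ × ℝ => (fun t : ℝ => δ * t ^ 2) q.1 * (fun _ : ℝ => (1 : ℝ)) q.2) :=
      contDiff_sep (contDiff_const.mul (contDiff_id.pow 2)) contDiff_const
    have hFC2 : ContDiffOn ℝ 2 F U :=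
      (contDiffOn_const.mul hf).add (hgC2.contDiffOn)
    have hFlap : ∀ q ∈ Ioo a b ×ˢ Ioo c d, lap F q = 2 * δ := by
      intro q hq
      rw [hF, lap_comb 1 hU (hsub hq) hf hgC2.contDiffOn, hlap q hq,
        lap_sep hsq hone hsq' hzero]
      ring
    have hFcont : ContinuousOn F (Icc a b ×ˢ Icc c d) :=
      (continuousOn_const.mul hcont).add (hgC2.continuous.continuousOn)
    -- maximize F on the compact rectangle
    have hK : IsCompact (Icc a b ×ˢ Icc c d) := (isCompact_Icc).prod isCompact_Icc
    have hne : (Icc a b ×ˢ Icc c d).Nonempty :=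
      (nonempty_Icc.mpr hab).prod (nonempty_Icc.mpr hcd)
    obtain ⟨p₀, hp₀, hmax⟩ := hK.exists_isMaxOn hne hFcont
    have hbd : ∀ q ∈ Icc a b ×ˢ Icc c d, q.1 ^ 2 ≤ C := by
      intro q hq
      rcases le_total q.1 0 with h | h
      · exact le_trans (by nlinarith [hq.1.1, hq.1.2] : q.1 ^ 2 ≤ a ^ 2) (le_max_left _ _)
      · exact le_trans (by nlinarith [hq.1.1, hq.1.2] : q.1 ^ 2 ≤ b ^ 2) (le_max_right _ _)
    have hp₀bd : f p₀ ≤ M := by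
      apply hM p₀ hp₀
      intro hint
      exact no_interior_max hU (hsub hint) hFC2
        (by rw [hFlap p₀ hint]; linarith)
        (hmax.isLocalMax (Filter.mem_of_superset
          ((isOpen_Ioo.prod isOpen_Ioo).mem_nhds hint)
          (prod_mono Ioo_subset_Icc_self Ioo_subset_Icc_self)))
    have h1 : F p ≤ F p₀ := hmax hp
    have h2 : F p₀ = f p₀ + δ * p₀.1 ^ 2 := by simp [hF]
    have h3 : F p = f p + δ * p.1 ^ 2 := by simp [hF]
    nlinarith [hbd p₀ hp₀, hbd p hp, mul_le_mul_of_nonneg_left (hbd p₀ hp₀) hδ.le,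
      mul_nonneg hδ.le (sq_nonneg p.1)]
  by_contra h
  push_neg at h
  have hC1 : (0:ℝ) < 2 * (C + 1) := by linarith
  set δ := (f p - M) / (2 * (C + 1)) with hδdef
  have hδ : 0 < δ := div_pos (by linarith) hC1
  have hkey := key δ hδ
  have h2 : δ * (C + 1) = (f p - M) / 2 := by
    rw [hδdef]; field_simp
  nlinarith [mul_le_mul_of_nonneg_left
    (by linarith : C ≤ C + 1) hδ.le]
lemma subboundary (H₁ H₂ B : ℝ) (φ : ℝ × ℝ → ℝ) (hH : H₁ < H₂) (hB : 0 ≤ B)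
    (hcont : ContinuousOn φ {p : ℝ × ℝ | H₁ ≤ p.2 ∧ p.2 ≤ H₂})
    (hC2 : ContDiffOn ℝ 2 φ {p : ℝ × ℝ | H₁ < p.2 ∧ p.2 < H₂})
    (hharm : ∀ p ∈ {p : ℝ × ℝ | H₁ < p.2 ∧ p.2 < H₂}, lap φ p = 0)
    (hbot : ∀ x : ℝ, φ (x, H₁) ≤ 0) (htop : ∀ x : ℝ, φ (x, H₂) ≤ 0)
    (hbd : ∀ p ∈ {p : ℝ × ℝ | H₁ ≤ p.2 ∧ p.2 ≤ H₂}, φ p ≤ B) :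
    ∀ p ∈ {p : ℝ × ℝ | H₁ ≤ p.2 ∧ p.2 ≤ H₂}, φ p ≤ 0 := by
  intro p₀ hp₀
  set dd : ℝ := H₂ - H₁ with hdd
  have hd : 0 < dd := by rw [hdd]; linarith
  set k : ℝ := dd⁻¹ with hkdef
  have hk : 0 < k := inv_pos.mpr hd
  have hkd : k * dd = 1 := inv_mul_cancel₀ hd.ne'
  set m : ℝ := (H₁ + H₂) / 2 with hm
  have isOpenStrip : IsOpen {p : ℝ × ℝ | H₁ < p.2 ∧ p.2 < H₂} := by
    have : {p : ℝ × ℝ | H₁ < p.2 ∧ p.2 < H₂} = Prod.snd ⁻¹' (Ioo H₁ H₂) := rfl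
    rw [this]
    exact isOpen_Ioo.preimage continuous_snd
  -- lower bound on the cosine factor
  have hcos : ∀ y : ℝ, H₁ ≤ y → y ≤ H₂ → 7/8 ≤ Real.cos (k * (y - m)) := by
    intro y h1 h2
    have hx1 : k * (y - m) ≤ 1/2 := by nlinarith [hkd, hk.le]
    have hx2 : -(1/2) ≤ k * (y - m) := by nlinarith [hkd, hk.le]
    have := Real.one_sub_sq_div_two_le_cos (x := k * (y - m))
    nlinarith
  have hcosle : ∀ y : ℝ, Real.cos (k * (y - m)) ≤ 1 := fun y => Real.cos_le_one _
  -- it suffices to bound φ p₀ by ε * cosh for every ε > 0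
  suffices h : ∀ ε : ℝ, 0 < ε → φ p₀ ≤ ε * Real.cosh (k * p₀.1) by
    by_contra hcon
    push_neg at hcon
    have hch : 0 < Real.cosh (k * p₀.1) := Real.cosh_pos _
    have hε : 0 < φ p₀ / (2 * Real.cosh (k * p₀.1)) := by positivity
    have h2 := h _ hε
    have h3 : φ p₀ / (2 * Real.cosh (k * p₀.1)) * Real.cosh (k * p₀.1) = φ p₀ / 2 := by
      field_simp
    rw [h3] at h2
    linarith
  intro ε hε
  -- barrier pieces and their derivatives
  set gw : ℝ → ℝ := fun t => -ε * Real.cosh (k * t) with hgw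
  set gw₁ : ℝ → ℝ := fun t => -ε * (Real.sinh (k * t) * k) with hgw₁
  set gw₂ : ℝ → ℝ := fun t => -ε * (Real.cosh (k * t) * k * k) with hgw₂
  set hw : ℝ → ℝ := fun t => Real.cos (k * (t - m)) with hhw
  set hw₁ : ℝ → ℝ := fun t => -Real.sin (k * (t - m)) * k with hhw₁
  set hw₂ : ℝ → ℝ := fun t => -(Real.cos (k * (t - m)) * k) * k with hhw₂
  have hinner : ∀ t : ℝ, HasDerivAt (fun t => k * t) k t := fun t => by
    simpa using (hasDerivAt_id t).const_mul k
  have hinner2 : ∀ t : ℝ, HasDerivAt (fun t => k * (t - m)) k t := fun t => by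
    simpa using ((hasDerivAt_id t).sub_const m).const_mul k
  have dgw : ∀ t, HasDerivAt gw (gw₁ t) t := fun t =>
    ((Real.hasDerivAt_cosh (k * t)).comp t (hinner t)).const_mul (-ε)
  have dgw₁ : ∀ t, HasDerivAt gw₁ (gw₂ t) t := fun t =>
    ((((Real.hasDerivAt_sinh (k * t)).comp t (hinner t))).mul_const k).const_mul (-ε)
  have dhw : ∀ t, HasDerivAt hw (hw₁ t) t := fun t => by
    rw [hhw, hhw₁]; exact (Real.hasDerivAt_cos (k * (t - m))).comp t (hinner2 t)
  have dhw₁ : ∀ t, HasDerivAt hw₁ (hw₂ t) t := fun t => by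
    rw [hhw₁, hhw₂]; exact (((Real.hasDerivAt_sin (k * (t - m))).comp t (hinner2 t)).neg).mul_const k
  have cgw : ContDiff ℝ 2 gw :=
    contDiff_const.mul ((Real.contDiff_cosh.of_le le_top).comp (contDiff_const.mul contDiff_id))
  have chw : ContDiff ℝ 2 hw :=
    (Real.contDiff_cos.of_le le_top).comp (contDiff_const.mul (contDiff_id.sub contDiff_const))
  -- choose the rectangle width
  set A : ℝ := 4 * B / ε + 2 with hA
  have hA0 : 0 < A := by positivity
  set R : ℝ := max |p₀.1| (dd * Real.log A) with hR
  have hR1 : |p₀.1| ≤ R := le_max_left _ _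
  have hcoshR : 2 * B / ε + 1 ≤ Real.cosh (k * R) := by
    have h1 : Real.log A ≤ k * R := by
      have h0 : dd * Real.log A ≤ R := le_max_right _ _
      have e : k * (dd * Real.log A) = Real.log A := by
        rw [← mul_assoc, hkd, one_mul]
      nlinarith [mul_le_mul_of_nonneg_left h0 hk.le]
    have h2 : A ≤ Real.exp (k * R) := by
      calc A = Real.exp (Real.log A) := (Real.exp_log hA0).symm
      _ ≤ Real.exp (k * R) := Real.exp_le_exp.mpr h1
    have h3 := Real.exp_pos (-(k * R))
    rw [Real.cosh_eq]
    rw [hA] at h2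
    have e : 4 * B / ε = 2 * (2 * B / ε) := by ring
    linarith
  -- apply the maximum principle on [-R, R] × [H₁, H₂]
  set F : ℝ × ℝ → ℝ := fun q => 1 * φ q + gw q.1 * hw q.2 with hF
  have hRnn : (0:ℝ) ≤ R := le_trans (abs_nonneg _) hR1
  have hrect : ∀ q ∈ Icc (-R) R ×ˢ Icc H₁ H₂, F q ≤ 0 := by
    apply rect_max (by linarith) hH.le isOpenStrip
      (fun q hq => ⟨hq.2.1, hq.2.2⟩)
      ((contDiffOn_const.mul hC2).add ((contDiff_sep cgw chw).contDiffOn))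
      ((continuousOn_const.mul (hcont.mono (fun q hq => ⟨hq.2.1, hq.2.2⟩))).add
        ((contDiff_sep cgw chw).continuous.continuousOn))
    · intro q hq
      rw [lap_comb 1 isOpenStrip ⟨hq.2.1, hq.2.2⟩ hC2 (contDiff_sep cgw chw).contDiffOn,
        hharm q ⟨hq.2.1, hq.2.2⟩, lap_sep dgw dhw dgw₁ dhw₁]
      simp only [hgw, hgw₂, hhw, hhw₂]
      ring
    · intro q hq hnot
      have hq1 : q.1 ∈ Icc (-R) R := hq.1
      have hq2 : q.2 ∈ Icc H₁ H₂ := hq.2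
      have hcosq : 7/8 ≤ hw q.2 := hcos q.2 hq2.1 hq2.2
      have hglenonpos : gw q.1 ≤ 0 := by
        have h := (Real.cosh_pos (k * q.1)).le
        show -ε * Real.cosh (k * q.1) ≤ 0
        nlinarith
      have hwalls : q.1 = -R ∨ q.1 = R ∨ q.2 = H₁ ∨ q.2 = H₂ := by
        by_contra hc
        push_neg at hc
        exact hnot ⟨⟨lt_of_le_of_ne hq1.1 (Ne.symm hc.1), lt_of_le_of_ne hq1.2 hc.2.1⟩,
          ⟨lt_of_le_of_ne hq2.1 (Ne.symm hc.2.2.1), lt_of_le_of_ne hq2.2 hc.2.2.2⟩⟩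
      -- wall case helper
      have hwall : ∀ hcR : Real.cosh (k * q.1) = Real.cosh (k * R), F q ≤ 0 := by
        intro hcR
        have hφB : φ q ≤ B := hbd q ⟨hq2.1, hq2.2⟩
        have h1 : gw q.1 * hw q.2 ≤ gw q.1 * (7/8) :=
          mul_le_mul_of_nonpos_left hcosq hglenonpos
        have h2 : 2 * B + ε ≤ ε * Real.cosh (k * R) := by
          have : 2 * B / ε * ε = 2 * B := div_mul_cancel₀ _ hε.ne'
          nlinarith [hcoshR]
        have h3 : gw q.1 = -ε * Real.cosh (k * R) := by rw [hgw]; simp only; rw [hcR]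
        show 1 * φ q + gw q.1 * hw q.2 ≤ 0
        rw [h3] at h1
        rw [h3]
        nlinarith [h1, h2, hφB, hε.le, hB]
      rcases hwalls with h | h | h | h
      · exact hwall (by rw [h]; rw [show k * -R = -(k * R) by ring, Real.cosh_neg])
      · exact hwall (by rw [h])
      · have hqe : q = (q.1, H₁) := by rw [← h]
        have : φ q ≤ 0 := by rw [hqe]; exact hbot q.1
        have hwnn : 0 ≤ hw q.2 := by linarith
        have hprod : gw q.1 * hw q.2 ≤ 0 :=
          mul_nonpos_iff.mpr (Or.inr ⟨hglenonpos, hwnn⟩)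
        show 1 * φ q + gw q.1 * hw q.2 ≤ 0
        linarith
      · have hqe : q = (q.1, H₂) := by rw [← h]
        have : φ q ≤ 0 := by rw [hqe]; exact htop q.1
        have hwnn : 0 ≤ hw q.2 := by linarith
        have hprod : gw q.1 * hw q.2 ≤ 0 :=
          mul_nonpos_iff.mpr (Or.inr ⟨hglenonpos, hwnn⟩)
        show 1 * φ q + gw q.1 * hw q.2 ≤ 0
        linarith
  have hp₀mem : p₀ ∈ Icc (-R) R ×ˢ Icc H₁ H₂ := by
    constructor
    · exact abs_le.mp hR1
    · exact ⟨hp₀.1, hp₀.2⟩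
  have := hrect p₀ hp₀mem
  rw [hF] at this
  have hcosp : hw p₀.2 ≤ 1 := hcosle p₀.2
  have hcosp0 : 0 ≤ hw p₀.2 := by linarith [hcos p₀.2 hp₀.1 hp₀.2]
  have hchp : 0 < Real.cosh (k * p₀.1) := Real.cosh_pos _
  simp only [hgw] at this
  nlinarith [this, mul_nonneg (mul_nonneg hε.le hchp.le) (sub_nonneg.mpr hcosp)]
/-- A function continuous on the closed strip `ℝ × [H₁,H₂]`, harmonic
in the open strip, with boundary values `0` on `y = H₁` and `Q` on `y = H₂`, and bounded
between `0` and `Q`, must be the linear profile `Q(y−H₁)/(H₂−H₁)`. -/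
theorem strip_dirichlet_uniqueness
    (H₁ H₂ Q : ℝ) (ψ : ℝ × ℝ → ℝ) (hH : H₁ < H₂)
    (hcont : ContinuousOn ψ {p : ℝ × ℝ | H₁ ≤ p.2 ∧ p.2 ≤ H₂})
    (hC2 : ContDiffOn ℝ 2 ψ {p : ℝ × ℝ | H₁ < p.2 ∧ p.2 < H₂})
    (hharm : ∀ p ∈ {p : ℝ × ℝ | H₁ < p.2 ∧ p.2 < H₂}, lap ψ p = 0)
    (hbot : ∀ x : ℝ, ψ (x, H₁) = 0)
    (htop : ∀ x : ℝ, ψ (x, H₂) = Q)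
    (hbound : ∀ p ∈ {p : ℝ × ℝ | H₁ ≤ p.2 ∧ p.2 ≤ H₂}, 0 ≤ ψ p ∧ ψ p ≤ Q) :
    ∀ p ∈ {p : ℝ × ℝ | H₁ ≤ p.2 ∧ p.2 ≤ H₂},
      ψ p = Q * (p.2 - H₁) / (H₂ - H₁) := by
  have hQ : 0 ≤ Q := by
    have := (hbound (0, H₂) ⟨hH.le, le_refl H₂⟩).1
    rwa [htop 0] at this
  have hne : H₂ - H₁ ≠ 0 := by intro h; linarith [hH]
  have hpos : 0 < H₂ - H₁ := by linarith
  have isOpenStrip : IsOpen {p : ℝ × ℝ | H₁ < p.2 ∧ p.2 < H₂} := by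
    have : {p : ℝ × ℝ | H₁ < p.2 ∧ p.2 < H₂} = Prod.snd ⁻¹' (Ioo H₁ H₂) := rfl
    rw [this]
    exact isOpen_Ioo.preimage continuous_snd
  set lh : ℝ → ℝ := fun t => Q * (t - H₁) / (H₂ - H₁) with hlh
  have dlh : ∀ t, HasDerivAt lh (Q / (H₂ - H₁)) t := by
    intro t
    have h0 : HasDerivAt (fun t => Q / (H₂ - H₁) * (t - H₁)) (Q / (H₂ - H₁) * 1) t :=
      ((hasDerivAt_id t).sub_const H₁).const_mul _
    have he : (fun t => Q / (H₂ - H₁) * (t - H₁)) = lh := by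
      funext t; rw [hlh]; ring
    rw [he, mul_one] at h0
    exact h0
  have dnlh : ∀ t, HasDerivAt (fun t => -lh t) (-(Q / (H₂ - H₁))) t := fun t => (dlh t).neg
  have done1 : ∀ t : ℝ, HasDerivAt (fun _ : ℝ => (1 : ℝ)) 0 t := fun t => hasDerivAt_const t 1
  have dzero : ∀ t : ℝ, HasDerivAt (fun _ : ℝ => (0 : ℝ)) 0 t := fun t => hasDerivAt_const t 0
  have dclh : ∀ t : ℝ, HasDerivAt (fun _ : ℝ => (Q / (H₂ - H₁))) 0 t :=
    fun t => hasDerivAt_const t _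
  have dcnlh : ∀ t : ℝ, HasDerivAt (fun _ : ℝ => (-(Q / (H₂ - H₁)))) 0 t :=
    fun t => hasDerivAt_const t _
  have clh2 : ContDiff ℝ 2 lh := by
    rw [hlh]
    exact (contDiff_const.mul (contDiff_id.sub contDiff_const)).div_const _
  have cnlh2 : ContDiff ℝ 2 (fun t => -lh t) := clh2.neg
  have hlhnn : ∀ t, H₁ ≤ t → 0 ≤ lh t := by
    intro t ht
    rw [hlh]
    exact div_nonneg (mul_nonneg hQ (by linarith)) hpos.le
  have hlhle : ∀ t, t ≤ H₂ → lh t ≤ Q := by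
    intro t ht
    rw [hlh]
    rw [div_le_iff₀ hpos]
    nlinarith
  -- upper bound : ψ ≤ lh
  have hupper : ∀ p ∈ {p : ℝ × ℝ | H₁ ≤ p.2 ∧ p.2 ≤ H₂},
      (fun q => 1 * ψ q + (fun _ : ℝ => (1 : ℝ)) q.1 * (fun t => -lh t) q.2) p ≤ 0 := by
    apply subboundary H₁ H₂ Q _ hH hQ
    · exact (continuousOn_const.mul hcont).add
        ((contDiff_sep contDiff_const cnlh2).continuous.continuousOn)
    · exact (contDiffOn_const.mul hC2).add
        ((contDiff_sep contDiff_const cnlh2).contDiffOn)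
    · intro q hq
      rw [lap_comb 1 isOpenStrip hq hC2 (contDiff_sep contDiff_const cnlh2).contDiffOn,
        hharm q hq, lap_sep done1 dnlh dzero dcnlh]
      ring
    · intro x
      simp only [hbot x, hlh]
      norm_num
    · intro x
      simp only [htop x, hlh]
      field_simp
      norm_num
    · intro q hq
      have h1 := (hbound q hq).2
      have h2 := hlhnn q.2 hq.1
      simp only
      linarith
  -- lower bound : lh ≤ ψ
  have hlower : ∀ p ∈ {p : ℝ × ℝ | H₁ ≤ p.2 ∧ p.2 ≤ H₂},
      (fun q => (-1) * ψ q + (fun _ : ℝ => (1 : ℝ)) q.1 * (fun t => lh t) q.2) p ≤ 0 := by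
    apply subboundary H₁ H₂ Q _ hH hQ
    · exact (continuousOn_const.mul hcont).add
        ((contDiff_sep contDiff_const clh2).continuous.continuousOn)
    · exact (contDiffOn_const.mul hC2).add
        ((contDiff_sep contDiff_const clh2).contDiffOn)
    · intro q hq
      rw [lap_comb (-1) isOpenStrip hq hC2 (contDiff_sep contDiff_const clh2).contDiffOn,
        hharm q hq, lap_sep done1 dlh dzero dclh]
      ring
    · intro x
      simp only [hbot x, hlh]
      norm_num
    · intro x
      simp only [htop x, hlh]
      field_simp
      norm_num
    · intro q hq
      have h1 := (hbound q hq).1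
      have h2 := hlhle q.2 hq.2
      simp only
      linarith
  intro p hp
  have h1 := hupper p hp
  have h2 := hlower p hp
  simp only at h1 h2
  have : ψ p = lh p.2 := by linarith
  rw [this, hlh]
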